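/- Let 𝔽 be ℝ or ℂ and let M₂(𝔽) be the algebra of 2×2 matrices over 𝔽, with matrix units E₁₁, E₁₂, E₂₁, E₂₂. If Φ : M₂(𝔽) → M₂(𝔽) is a surjective map satisfying [Φ(A), Φ(B)]₃ = [A, B]₃ for all A, B ∈ M₂(𝔽), then for every a ∈ 𝔽 there exist scalars c, μ ∈ 𝔽 such that Φ(a·E₁₁) = c·E₁₁ + μ·I. -/

import Mathlib

/-- The commutator `[A,B] = AB - BA` in a ring. -/
def bracket1 {R : Type*} [Ring R] (A B : R) : R := A * B - B * A

/-- The 3-commutator `[A,B]₃ = [[[A,B],B],B]` in a ring. -/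
def bracket3 {R : Type*} [Ring R] (A B : R) : R := bracket1 (bracket1 (bracket1 A B) B) B

/-- Key 2×2 identity: `[Z,M]₃ = D(M) • [Z,M]` with `D(M) = (M₀₀-M₁₁)² + 4 M₀₁ M₁₀`. -/
lemma key_id {𝕜 : Type*} [CommRing 𝕜] (Z M : Matrix (Fin 2) (Fin 2) 𝕜) :
    bracket3 Z M = ((M 0 0 - M 1 1)^2 + 4 * (M 0 1 * M 1 0)) • bracket1 Z M := by
  ext i j
  fin_cases i <;> fin_cases j <;>
    simp [bracket3, bracket1, Matrix.mul_apply, Matrix.sub_apply, Matrix.smul_apply,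
      Fin.sum_univ_two, smul_eq_mul] <;> ring

theorem stmt_19 {𝕜 : Type*} [RCLike 𝕜]
    (Φ : Matrix (Fin 2) (Fin 2) 𝕜 → Matrix (Fin 2) (Fin 2) 𝕜)
    (hsurj : Function.Surjective Φ)
    (hpres : ∀ A B : Matrix (Fin 2) (Fin 2) 𝕜, bracket3 (Φ A) (Φ B) = bracket3 A B) :
    ∀ a : 𝕜, ∃ c mu : 𝕜,
      Φ (a • Matrix.single 0 0 (1 : 𝕜)) =
        c • Matrix.single 0 0 (1 : 𝕜) + mu • (1 : Matrix (Fin 2) (Fin 2) 𝕜) := by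
  intro a
  set E11 : Matrix (Fin 2) (Fin 2) 𝕜 := Matrix.single 0 0 (1 : 𝕜) with hE11
  set M : Matrix (Fin 2) (Fin 2) 𝕜 := Φ (a • E11) with hM
  -- it suffices to show the off-diagonal entries of M vanish
  suffices h : M 0 1 = 0 ∧ M 1 0 = 0 by
    refine ⟨M 0 0 - M 1 1, M 1 1, ?_⟩
    ext i j
    fin_cases i <;> fin_cases j <;>
      simp [hE11, Matrix.single, Matrix.one_apply, h.1, h.2]
  by_cases ha : a = 0
  · -- a = 0 : use a preimage of E11
    obtain ⟨X, hX⟩ := hsurj E11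
    have h := hpres (a • E11) X
    rw [hX, ha, zero_smul] at h
    -- RHS is bracket3 0 X = 0
    have hz : bracket3 (0 : Matrix (Fin 2) (Fin 2) 𝕜) X = 0 := by
      simp [bracket3, bracket1]
    rw [hz, key_id] at h
    -- D(E11) = 1, so bracket1 M E11 = 0
    have hD : ((E11 0 0 - E11 1 1)^2 + 4 * (E11 0 1 * E11 1 0)) = 1 := by
      simp [hE11, Matrix.single]
    rw [hD, one_smul] at h
    have h01 := congrFun (congrFun h 0) 1
    have h10 := congrFun (congrFun h 1) 0
    simp only [bracket1, Matrix.sub_apply, Matrix.mul_apply, Fin.sum_univ_two,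
      Matrix.zero_apply, hE11, Matrix.single, Matrix.of_apply] at h01 h10
    rw [ha] at hM
    constructor
    · simpa [hM] using h01
    · simpa [hM] using h10
  · -- a ≠ 0
    set D : 𝕜 := (M 0 0 - M 1 1)^2 + 4 * (M 0 1 * M 1 0) with hD
    -- D ≠ 0
    have hDne : D ≠ 0 := by
      intro h0
      obtain ⟨Xe, hXe⟩ := hsurj (Matrix.single 0 1 (1 : 𝕜))
      have h := hpres (Matrix.single 0 1 (1 : 𝕜)) (a • E11)
      rw [key_id (Φ (Matrix.single 0 1 (1 : 𝕜))) (Φ (a • E11)),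
        key_id (Matrix.single 0 1 (1 : 𝕜)) (a • E11), ← hM, ← hD, h0, zero_smul] at h
      have h01 := congrFun (congrFun h.symm 0) 1
      simp only [bracket1, Matrix.smul_apply, Matrix.sub_apply, Matrix.mul_apply,
        Fin.sum_univ_two, Matrix.zero_apply, hE11, Matrix.single, Matrix.of_apply,
        smul_eq_mul] at h01
      simp only [and_self, and_true, if_true] at h01
      -- h01 should reduce to an equation implying a^3 = 0
      norm_num at h01
      exact ha h01
    -- preimage of E12 gives M 1 0 = 0
    have key10 : M 1 0 = 0 := by
      obtain ⟨Xe, hXe⟩ := hsurj (Matrix.single 0 1 (1 : 𝕜))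
      have h := hpres Xe (a • E11)
      rw [hXe, key_id (Matrix.single 0 1 (1 : 𝕜)) M, key_id Xe (a • E11), ← hD] at h
      have h00 := congrFun (congrFun h 0) 0
      simp only [bracket1, Matrix.smul_apply, Matrix.sub_apply, Matrix.mul_apply,
        Fin.sum_univ_two, hE11, Matrix.single, Matrix.of_apply, smul_eq_mul] at h00
      norm_num at h00
      have hz : D * M 1 0 = 0 := by rw [h00]; ring
      exact (mul_eq_zero.mp hz).resolve_left hDne
    have key01 : M 0 1 = 0 := by
      obtain ⟨Xf, hXf⟩ := hsurj (Matrix.single 1 0 (1 : 𝕜))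
      have h := hpres Xf (a • E11)
      rw [hXf, key_id (Matrix.single 1 0 (1 : 𝕜)) M, key_id Xf (a • E11), ← hD] at h
      have h00 := congrFun (congrFun h 0) 0
      simp only [bracket1, Matrix.smul_apply, Matrix.sub_apply, Matrix.mul_apply,
        Fin.sum_univ_two, hE11, Matrix.single, Matrix.of_apply, smul_eq_mul] at h00
      norm_num at h00
      have hz : D * M 0 1 = 0 := by
        have h' : -(D * M 0 1) = 0 := by rw [h00]; ring
        exact neg_eq_zero.mp h'
      exact (mul_eq_zero.mp hz).resolve_left hDne
    exact ⟨key01, key10⟩
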